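/- Let a > 0 be real and b, c, d, g, h, u, w real numbers. Set f = a·h + b/a², v = a·g + b·h + c/a², z = a·f + b/a, t = a·w + b·g + c·h + d/a², y = a·v + b·f + c/a, x = a·z + b. Let M = a·N + b·N² + c·N³ + d·N⁴ where N is the 5×5 nilpotent Jordan block, and let H be the upper triangular 5×5 matrix with rows (a², x, y, t, u), (0, a, z, v, w), (0, 0, 1, f, g), (0, 0, 0, a^{−1}, h), (0, 0, 0, 0, a^{−2}). Then H is invertible and M·H = H·N (equivalently H⁻¹MH = N). -/

import Mathlib

private lemma simA5_aux_N2 :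
    (!![0, 1, 0, 0, 0; 0, 0, 1, 0, 0; 0, 0, 0, 1, 0; 0, 0, 0, 0, 1; 0, 0, 0, 0, 0] :
      Matrix (Fin 5) (Fin 5) ℝ) ^ 2 =
    !![0,0,1,0,0; 0,0,0,1,0; 0,0,0,0,1; 0,0,0,0,0; 0,0,0,0,0] := by
  rw [pow_two]
  ext i j
  fin_cases i <;> fin_cases j <;>
    simp [Matrix.mul_apply, Fin.sum_univ_five, Matrix.vecHead, Matrix.vecTail]

private lemma simA5_aux_N3 :
    (!![0, 1, 0, 0, 0; 0, 0, 1, 0, 0; 0, 0, 0, 1, 0; 0, 0, 0, 0, 1; 0, 0, 0, 0, 0] :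
      Matrix (Fin 5) (Fin 5) ℝ) ^ 3 =
    !![0,0,0,1,0; 0,0,0,0,1; 0,0,0,0,0; 0,0,0,0,0; 0,0,0,0,0] := by
  rw [pow_succ, simA5_aux_N2]
  ext i j
  fin_cases i <;> fin_cases j <;>
    simp [Matrix.mul_apply, Fin.sum_univ_five, Matrix.vecHead, Matrix.vecTail]

private lemma simA5_aux_N4 :
    (!![0, 1, 0, 0, 0; 0, 0, 1, 0, 0; 0, 0, 0, 1, 0; 0, 0, 0, 0, 1; 0, 0, 0, 0, 0] :
      Matrix (Fin 5) (Fin 5) ℝ) ^ 4 =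
    !![0,0,0,0,1; 0,0,0,0,0; 0,0,0,0,0; 0,0,0,0,0; 0,0,0,0,0] := by
  rw [pow_succ, simA5_aux_N3]
  ext i j
  fin_cases i <;> fin_cases j <;>
    simp [Matrix.mul_apply, Fin.sum_univ_five, Matrix.vecHead, Matrix.vecTail]

set_option maxHeartbeats 1000000 in
private lemma simA5_aux_M (a b c d : ℝ) :
    a • (!![0, 1, 0, 0, 0; 0, 0, 1, 0, 0; 0, 0, 0, 1, 0; 0, 0, 0, 0, 1; 0, 0, 0, 0, 0] :
        Matrix (Fin 5) (Fin 5) ℝ) +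
      b • !![0, 1, 0, 0, 0; 0, 0, 1, 0, 0; 0, 0, 0, 1, 0; 0, 0, 0, 0, 1; 0, 0, 0, 0, 0] ^ 2 +
      c • !![0, 1, 0, 0, 0; 0, 0, 1, 0, 0; 0, 0, 0, 1, 0; 0, 0, 0, 0, 1; 0, 0, 0, 0, 0] ^ 3 +
      d • !![0, 1, 0, 0, 0; 0, 0, 1, 0, 0; 0, 0, 0, 1, 0; 0, 0, 0, 0, 1; 0, 0, 0, 0, 0] ^ 4 =
    !![0,a,b,c,d; 0,0,a,b,c; 0,0,0,a,b; 0,0,0,0,a; 0,0,0,0,0] := by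
  rw [simA5_aux_N2, simA5_aux_N3, simA5_aux_N4]
  ext i j
  fin_cases i <;> fin_cases j <;>
    simp [Matrix.add_apply, Matrix.smul_apply, Matrix.vecHead, Matrix.vecTail]

/-- For real a > 0 and real b, c, d, g, h, u, w, with the derived quantities
f = a·h + b/a², v = a·g + b·h + c/a², z = a·f + b/a, t = a·w + b·g + c·h + d/a²,
y = a·v + b·f + c/a, x = a·z + b, M = a·N + b·N² + c·N³ + d·N⁴ (N the 5×5 nilpotent
Jordan block), and H the given upper triangular matrix, H is invertible and M·H = H·N. -/
theorem similarity_A5 (a b c d g h u w : ℝ) (ha : 0 < a) :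
    let f : ℝ := a * h + b / a ^ 2
    let v : ℝ := a * g + b * h + c / a ^ 2
    let z : ℝ := a * f + b / a
    let t : ℝ := a * w + b * g + c * h + d / a ^ 2
    let y : ℝ := a * v + b * f + c / a
    let x : ℝ := a * z + b
    let N : Matrix (Fin 5) (Fin 5) ℝ :=
      !![0, 1, 0, 0, 0;
         0, 0, 1, 0, 0;
         0, 0, 0, 1, 0;
         0, 0, 0, 0, 1;
         0, 0, 0, 0, 0]
    let M : Matrix (Fin 5) (Fin 5) ℝ := a • N + b • N ^ 2 + c • N ^ 3 + d • N ^ 4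
    let H : Matrix (Fin 5) (Fin 5) ℝ :=
      !![a ^ 2, x, y, t, u;
         0,     a, z, v, w;
         0,     0, 1, f, g;
         0,     0, 0, a⁻¹, h;
         0,     0, 0, 0, (a ^ 2)⁻¹]
    IsUnit H ∧ M * H = H * N := by
  intro f v z t y x N M H
  have ha' : a ≠ 0 := ne_of_gt ha
  have hM : M = !![0,a,b,c,d; 0,0,a,b,c; 0,0,0,a,b; 0,0,0,0,a; 0,0,0,0,0] :=
    simA5_aux_M a b c d
  constructor
  · rw [Matrix.isUnit_iff_isUnit_det]
    have hdet : H.det = 1 := by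
      simp only [H]
      simp [Matrix.det_succ_column_zero, Fin.sum_univ_succ]
      field_simp
    rw [hdet]
    exact isUnit_one
  · rw [hM]
    clear hM
    ext i j
    fin_cases i <;> fin_cases j <;>
      · simp [H, N, Matrix.mul_apply, Fin.sum_univ_five, Matrix.vecHead, Matrix.vecTail,
          Function.comp, f, v, z, t, y, x]
        try field_simp
        try ring
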